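/- Let a ∈ ℝ^d with ‖a‖ = 1, let c ∈ ℝ, and let S be a nonempty closed convex subset of ℝ^d contained in the half-space {y : ⟨a, y⟩ ≤ c}. For any x ∈ ℝ^d, set x' = x − max(⟨a, x⟩ − c, 0)·a. Then d(x', S)² ≤ d(x, S)² − (max(⟨a, x⟩ − c, 0))². -/
import Mathlib


open scoped RealInnerProductSpace BigOperators

noncomputable section

/-- **Lemma (progress of the simple Kaczmarz step for an inequality).**
Let `a ∈ ℝ^d` with `‖a‖ = 1`, `c ∈ ℝ`, and let `S` be a nonempty closed convex set contained
in the half-space `{y : ⟪a, y⟫ ≤ c}`.  For any `x`, the randomized Kaczmarz update for the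
inequality `⟪a, y⟫ ≤ c`, namely `x' = x − max(⟪a, x⟫ − c, 0) • a`, satisfies
`d(x', S)² ≤ d(x, S)² − max(⟪a, x⟫ − c, 0)²`. -/
theorem kaczmarz_inequality_step_progress
    {d : ℕ} (a : EuclideanSpace ℝ (Fin d)) (ha : ‖a‖ = 1) (c : ℝ)
    (S : Set (EuclideanSpace ℝ (Fin d)))
    (hSne : S.Nonempty) (hSclosed : IsClosed S) (hSconv : Convex ℝ S)
    (hShalf : ∀ y ∈ S, ⟪a, y⟫ ≤ c)
    (x : EuclideanSpace ℝ (Fin d)) :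
    Metric.infDist (x - max (⟪a, x⟫ - c) 0 • a) S ^ 2 ≤
      Metric.infDist x S ^ 2 - (max (⟪a, x⟫ - c) 0) ^ 2 := by
  set t : ℝ := max (⟪a, x⟫ - c) 0 with ht
  obtain ⟨p, hpS, hp⟩ := hSclosed.exists_infDist_eq_dist hSne x
  have ht0 : 0 ≤ t := le_max_right _ _
  have htc : t * (⟪a, x⟫ - c) = t ^ 2 := by
    rcases le_or_gt (⟪a, x⟫ - c) 0 with h | h
    · have : t = 0 := max_eq_right h
      simp [this]
    · have : t = ⟪a, x⟫ - c := max_eq_left h.le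
      rw [this]; ring
  have key : ‖(x - t • a) - p‖ ^ 2 ≤ ‖x - p‖ ^ 2 - t ^ 2 := by
    have hrw : (x - t • a) - p = (x - p) - t • a := by abel
    rw [hrw, norm_sub_sq_real]
    have hip : ⟪x - p, t • a⟫ = t * (⟪a, x⟫ - ⟪a, p⟫) := by
      rw [real_inner_smul_right, real_inner_comm, inner_sub_right]
    have hna : ‖t • a‖ ^ 2 = t ^ 2 := by
      rw [norm_smul, ha]; simp [abs_of_nonneg ht0]
    rw [hip, hna]
    have hpc : ⟪a, p⟫ ≤ c := hShalf p hpS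
    nlinarith [mul_le_mul_of_nonneg_left hpc ht0]
  have h1 : Metric.infDist (x - t • a) S ≤ dist (x - t • a) p :=
    Metric.infDist_le_dist_of_mem hpS
  have h2 : Metric.infDist (x - t • a) S ^ 2 ≤ dist (x - t • a) p ^ 2 := by
    have := Metric.infDist_nonneg (x := x - t • a) (s := S)
    nlinarith
  calc Metric.infDist (x - t • a) S ^ 2 ≤ dist (x - t • a) p ^ 2 := h2
    _ = ‖(x - t • a) - p‖ ^ 2 := by rw [dist_eq_norm]
    _ ≤ ‖x - p‖ ^ 2 - t ^ 2 := key
    _ = Metric.infDist x S ^ 2 - t ^ 2 := by rw [hp, dist_eq_norm]
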